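/- Absence of collapses for positive intensities: Let G : (0,∞) → ℝ be differentiable with locally Lipschitz derivative on (0,∞), with derivative Lipschitz and bounded on [1,∞), and such that |G(r)| → +∞ as r → 0⁺. Assume all intensities a_1,…,a_N are positive. Then for every T > 0 and every solution (x_1,…,x_N) of the point-vortex system with kernel G on [0,T) with no collapse, one has liminf_{t→T⁻} min_{i≠j} |x_i(t) − x_j(t)| > 0; that is, no collapse of vortices occurs at any finite time. -/

import Mathlib

open Filter MeasureTheory

noncomputable section

/-- The plane `ℝ²`. -/
abbrev Plane : Type := EuclideanSpace ℝ (Fin 2)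

/-- Counterclockwise rotation by `π/2`: `(v₁, v₂)^⊥ = (−v₂, v₁)`. -/
def perp (v : Plane) : Plane := WithLp.toLp 2 ![-v 1, v 0]

/-- `∇^⊥_y K(|y|) = K'(|y|) y^⊥ / |y|` for a radial kernel profile `K`. -/
def gradPerp (K : ℝ → ℝ) (y : Plane) : Plane := (deriv K ‖y‖ / ‖y‖) • perp y

/-- A solution of the point-vortex system with intensities `a`, kernel profile `G`,
on the time interval `[0, T)`, with no collapse. -/
def IsVortexSolution (N : ℕ) (a : Fin N → ℝ) (G : ℝ → ℝ) (T : ℝ)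
    (x : Fin N → ℝ → Plane) : Prop :=
  (∀ t ∈ Set.Ico (0 : ℝ) T, ∀ i j : Fin N, i ≠ j → x i t ≠ x j t) ∧
  ∀ i : Fin N, ∀ t ∈ Set.Ico (0 : ℝ) T,
    HasDerivWithinAt (x i)
      (∑ j ∈ Finset.univ.erase i, a j • gradPerp G (x i t - x j t))
      (Set.Ico 0 T) t

/-- The kernel regularity used in the paper: `G ∈ C^{1,1}_loc((0,∞)) ∩ C^{1,1}([1,∞))`,
i.e. `G` is differentiable on `(0,∞)`, with locally Lipschitz derivative there,
and with Lipschitz derivative on `[1,∞)`. -/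
def KernelRegular (G : ℝ → ℝ) : Prop :=
  DifferentiableOn ℝ G (Set.Ioi 0) ∧
  (∀ s : Set ℝ, IsCompact s → s ⊆ Set.Ioi 0 → ∃ L : NNReal, LipschitzOnWith L (deriv G) s) ∧
  (∃ L : NNReal, LipschitzOnWith L (deriv G) (Set.Ici 1))

/-- The solution `x` collapses at time `T`:
`liminf_{t→T⁻} min_{i≠j} |x_i(t) − x_j(t)| = 0`, phrased as: for every `ε > 0`,
arbitrarily close to `T` (from the left, inside `[0,T)`) two distinct vortices
are at distance `< ε`. -/
def CollapsesAt (N : ℕ) (x : Fin N → ℝ → Plane) (T : ℝ) : Prop :=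
  ∀ ε > (0 : ℝ), ∀ t₀, 0 ≤ t₀ → t₀ < T →
    ∃ t, t₀ < t ∧ t < T ∧ ∃ i j : Fin N, i ≠ j ∧ ‖x i t - x j t‖ < ε

open Set RealInnerProductSpace

section Aux

lemma perp_smul (c : ℝ) (v : Plane) : perp (c • v) = c • perp v := by
  ext i; fin_cases i <;> simp [perp, PiLp.smul_apply] <;> ring

lemma perp_add (u v : Plane) : perp (u + v) = perp u + perp v := by
  ext i; fin_cases i <;> simp [perp, PiLp.add_apply] <;> ring

lemma perp_zero' : perp 0 = 0 := by
  ext i; fin_cases i <;> simp [perp]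

lemma perp_neg (v : Plane) : perp (-v) = - perp v := by
  ext i; fin_cases i <;> simp [perp]

lemma inner_perp_self (v : Plane) : ⟪perp v, v⟫ = 0 := by
  simp [perp, PiLp.inner_apply, Fin.sum_univ_two, RCLike.inner_apply]
  ring

lemma perp_sum {ι : Type*} (s : Finset ι) (f : ι → Plane) :
    perp (∑ j ∈ s, f j) = ∑ j ∈ s, perp (f j) := by
  classical
  induction s using Finset.induction with
  | empty => simp [perp_zero']
  | insert _ _ h ih => simp only [Finset.sum_insert h, perp_add, ih]

lemma gradPerp_neg (K : ℝ → ℝ) (y : Plane) : gradPerp K (-y) = - gradPerp K y := by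
  simp [gradPerp, perp_neg, norm_neg, smul_neg]

lemma sum_erase_swap {N : ℕ} (f : Fin N → Fin N → ℝ) :
    ∑ i, ∑ j ∈ Finset.univ.erase i, f i j = ∑ i, ∑ j ∈ Finset.univ.erase i, f j i := by
  simp only [← Finset.filter_ne', Finset.sum_filter]
  rw [Finset.sum_comm]
  refine Finset.sum_congr rfl fun i _ => Finset.sum_congr rfl fun j _ => ?_
  simp [ne_comm]

lemma hasDeriv_norm_comp {E : Type*} [NormedAddCommGroup E] [InnerProductSpace ℝ E]
    {y : ℝ → E} {y' : E} {s : Set ℝ} {t : ℝ}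
    (hy : HasDerivWithinAt y y' s t) (h0 : y t ≠ 0) :
    HasDerivWithinAt (fun u => ‖y u‖) (⟪y', y t⟫ / ‖y t‖) s t := by
  have hq : ⟪y t, y t⟫ ≠ 0 := by
    rw [real_inner_self_eq_norm_sq]
    exact pow_ne_zero 2 (norm_ne_zero_iff.2 h0)
  have h1 : HasDerivWithinAt (fun u => ⟪y u, y u⟫) (⟪y t, y'⟫ + ⟪y', y t⟫) s t :=
    hy.inner ℝ hy
  have h2 := (Real.hasDerivAt_sqrt hq).comp_hasDerivWithinAt t h1
  have hfun : (fun u => Real.sqrt ⟪y u, y u⟫) = fun u => ‖y u‖ := by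
    funext u; rw [real_inner_self_eq_norm_sq, Real.sqrt_sq (norm_nonneg _)]
  have hnorm : Real.sqrt ⟪y t, y t⟫ = ‖y t‖ := by
    rw [real_inner_self_eq_norm_sq, Real.sqrt_sq (norm_nonneg _)]
  have hval : 1 / (2 * Real.sqrt ⟪y t, y t⟫) * (⟪y t, y'⟫ + ⟪y', y t⟫)
      = ⟪y', y t⟫ / ‖y t‖ := by
    rw [hnorm, real_inner_comm (y t) y']
    have hne : ‖y t‖ ≠ 0 := norm_ne_zero_iff.2 h0
    field_simp
    ring
  simp only [Function.comp_def] at h2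
  rw [hfun] at h2
  exact hval ▸ h2

lemma hasDeriv_K_norm {K : ℝ → ℝ} (hK : DifferentiableOn ℝ K (Set.Ioi 0))
    {y : ℝ → Plane} {y' : Plane} {s : Set ℝ} {t : ℝ}
    (hy : HasDerivWithinAt y y' s t) (h0 : y t ≠ 0) :
    HasDerivWithinAt (fun u => K ‖y u‖) (deriv K ‖y t‖ * (⟪y', y t⟫ / ‖y t‖)) s t := by
  have hr : (0:ℝ) < ‖y t‖ := norm_pos_iff.2 h0
  have hK' : HasDerivAt K (deriv K ‖y t‖) ‖y t‖ :=
    ((hK ‖y t‖ hr).differentiableAt (Ioi_mem_nhds hr)).hasDerivAt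
  exact hK'.comp_hasDerivWithinAt t (hasDeriv_norm_comp hy h0)

lemma const_of_deriv_zero {f : ℝ → ℝ} {T : ℝ}
    (hd : ∀ t ∈ Set.Ico (0:ℝ) T, HasDerivWithinAt f 0 (Set.Ico (0:ℝ) T) t) :
    ∀ t ∈ Set.Ico (0:ℝ) T, f t = f 0 := by
  intro t ht
  have key := constant_of_has_deriv_right_zero (f := f) (a := 0) (b := t) ?_ ?_
  · exact key t ⟨ht.1, le_rfl⟩
  · intro s hs
    exact ((hd s ⟨hs.1, lt_of_le_of_lt hs.2 ht.2⟩).continuousWithinAt).mono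
      (fun u hu => ⟨hu.1, lt_of_le_of_lt hu.2 ht.2⟩)
  · intro s hs
    have hs' : s ∈ Set.Ico (0:ℝ) T := ⟨hs.1, hs.2.trans ht.2⟩
    refine (hd s hs').mono_of_mem_nhdsWithin ?_
    have h1 : Set.Iio T ∈ nhdsWithin s (Set.Ici s) :=
      mem_nhdsWithin_of_mem_nhds (Iio_mem_nhds hs'.2)
    refine Filter.mem_of_superset (Filter.inter_mem h1 self_mem_nhdsWithin) ?_
    rintro u ⟨hu1, hu2⟩
    exact ⟨hs'.1.trans hu2, hu1⟩

lemma F_eq_perp (K : ℝ → ℝ) {n : ℕ} (a : Fin n → ℝ) (z : Fin n → Plane) (i : Fin n) :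
    ∑ j ∈ Finset.univ.erase i, a j • gradPerp K (z i - z j)
      = perp (∑ j ∈ Finset.univ.erase i,
          (a j * (deriv K ‖z i - z j‖ / ‖z i - z j‖)) • (z i - z j)) := by
  rw [perp_sum]
  refine Finset.sum_congr rfl fun j _ => ?_
  rw [perp_smul, gradPerp, smul_smul]

end Aux

/-- Absence of collapses when all intensities are positive, for a kernel `G` of class
`C^{1,1}_loc((0,∞)) ∩ C^{1,1}([1,∞))` with `G'` bounded on `[1,∞)` and `|G(r)| → +∞`
as `r → 0⁺`: no collapse of vortices occurs at any finite time. -/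
theorem no_collapse_of_positive_intensities
    (N : ℕ) (hN : 1 ≤ N) (a : Fin N → ℝ) (ha : ∀ i, 0 < a i)
    (G : ℝ → ℝ) (hG : KernelRegular G)
    (hGbdd : ∃ M : ℝ, ∀ r : ℝ, 1 ≤ r → |deriv G r| ≤ M)
    (hGsing : Tendsto (fun r => |G r|) (nhdsWithin 0 (Set.Ioi 0)) atTop) :
    ∀ T : ℝ, 0 < T → ∀ x : Fin N → ℝ → Plane,
      IsVortexSolution N a G T x → ¬ CollapsesAt N x T := by
  classical
  intro T hT x hsol hcol
  obtain ⟨hsep, hdx⟩ := hsol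
  set F : Fin N → ℝ → Plane :=
    fun i t => ∑ j ∈ Finset.univ.erase i, a j • gradPerp G (x i t - x j t) with hFdef
  have hdxF : ∀ i : Fin N, ∀ t ∈ Set.Ico (0:ℝ) T,
      HasDerivWithinAt (x i) (F i t) (Set.Ico (0:ℝ) T) t := hdx
  -- Conservation of the moment of inertia
  have hIder : ∀ t ∈ Set.Ico (0:ℝ) T,
      HasDerivWithinAt (fun u => ∑ i, a i * ⟪x i u, x i u⟫) 0 (Set.Ico (0:ℝ) T) t := by
    intro t ht
    have h := HasDerivWithinAt.sum (u := Finset.univ)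
      (fun i _ => ((hdxF i t ht).inner ℝ (hdxF i t ht)).const_mul (a i))
    convert h using 1
    case e'_4 => rfl
    case e'_5 => rfl
    case e'_8 => ext u; simp [Finset.sum_apply]
    symm
    have he : ∀ i, a i * (⟪x i t, F i t⟫ + ⟪F i t, x i t⟫)
        = ∑ j ∈ Finset.univ.erase i,
            2 * (a i * (a j * ⟪gradPerp G (x i t - x j t), x i t⟫)) := by
      intro i
      have hFi : ⟪F i t, x i t⟫
          = ∑ j ∈ Finset.univ.erase i, a j * ⟪gradPerp G (x i t - x j t), x i t⟫ := by
        rw [hFdef, sum_inner]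
        exact Finset.sum_congr rfl fun j _ => real_inner_smul_left _ _ _
      rw [real_inner_comm (F i t) (x i t), hFi, ← Finset.sum_add_distrib, Finset.mul_sum]
      exact Finset.sum_congr rfl fun j _ => by ring
    rw [Finset.sum_congr rfl fun i _ => he i]
    set Sv := ∑ i, ∑ j ∈ Finset.univ.erase i,
      2 * (a i * (a j * ⟪gradPerp G (x i t - x j t), x i t⟫)) with hSv
    have hdouble : Sv + Sv = 0 := by
      nth_rewrite 2 [hSv]
      rw [sum_erase_swap (N := N)
        (f := fun i j => 2 * (a i * (a j * ⟪gradPerp G (x i t - x j t), x i t⟫)))]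
      rw [hSv, ← Finset.sum_add_distrib]
      refine Finset.sum_eq_zero fun i _ => ?_
      rw [← Finset.sum_add_distrib]
      refine Finset.sum_eq_zero fun j _ => ?_
      rw [show x j t - x i t = -(x i t - x j t) from (neg_sub _ _).symm,
        gradPerp_neg, inner_neg_left]
      have hpq : ⟪gradPerp G (x i t - x j t), x i t⟫
          - ⟪gradPerp G (x i t - x j t), x j t⟫ = 0 := by
        rw [← inner_sub_right]
        simp only [gradPerp]
        rw [real_inner_smul_left, inner_perp_self, mul_zero]
      linear_combination 2 * a i * a j * hpq
    linarith
  have hIconst := const_of_deriv_zero hIder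
  -- Uniform bound on mutual distances
  set I0 : ℝ := ∑ k, a k * ⟪x k 0, x k 0⟫ with hI0def
  set D : ℝ := ∑ k, Real.sqrt (I0 / a k) with hDdef
  have hxb : ∀ t ∈ Set.Ico (0:ℝ) T, ∀ i, ‖x i t‖ ≤ Real.sqrt (I0 / a i) := by
    intro t ht i
    have h1 : a i * ‖x i t‖^2 ≤ I0 := by
      rw [← real_inner_self_eq_norm_sq, ← hIconst t ht]
      exact Finset.single_le_sum (f := fun k => a k * ⟪x k t, x k t⟫)
        (fun k _ => mul_nonneg (ha k).le real_inner_self_nonneg) (Finset.mem_univ i)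
    have h2 : ‖x i t‖^2 ≤ I0 / a i := (le_div_iff₀' (ha i)).2 h1
    calc ‖x i t‖ = Real.sqrt (‖x i t‖^2) := (Real.sqrt_sq (norm_nonneg _)).symm
      _ ≤ _ := Real.sqrt_le_sqrt h2
  have hDb : ∀ t ∈ Set.Ico (0:ℝ) T, ∀ i j : Fin N, i ≠ j → ‖x i t - x j t‖ ≤ D := by
    intro t ht i j hij
    calc ‖x i t - x j t‖ ≤ ‖x i t‖ + ‖x j t‖ := norm_sub_le _ _
      _ ≤ Real.sqrt (I0 / a i) + Real.sqrt (I0 / a j) :=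
          add_le_add (hxb t ht i) (hxb t ht j)
      _ = ∑ k ∈ ({i, j} : Finset (Fin N)), Real.sqrt (I0 / a k) :=
          (Finset.sum_pair (f := fun k => Real.sqrt (I0 / a k)) hij).symm
      _ ≤ D := Finset.sum_le_sum_of_subset_of_nonneg (Finset.subset_univ _)
          (fun k _ _ => Real.sqrt_nonneg _)
  -- Conservation of the Hamiltonian
  have hHder : ∀ t ∈ Set.Ico (0:ℝ) T,
      HasDerivWithinAt
        (fun u => ∑ i, ∑ j ∈ Finset.univ.erase i, a i * a j * G ‖x i u - x j u‖)
        0 (Set.Ico (0:ℝ) T) t := by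
    intro t ht
    have hterm : ∀ i : Fin N, ∀ j ∈ Finset.univ.erase i,
        HasDerivWithinAt (fun u => a i * a j * G ‖x i u - x j u‖)
          (a i * a j * (deriv G ‖x i t - x j t‖ *
            (⟪F i t - F j t, x i t - x j t⟫ / ‖x i t - x j t‖)))
          (Set.Ico (0:ℝ) T) t := by
      intro i j hj
      have hij : i ≠ j := ((Finset.mem_erase.1 hj).1).symm
      have h0 : x i t - x j t ≠ 0 := sub_ne_zero.2 (hsep t ht i j hij)
      have hy : HasDerivWithinAt (fun u => x i u - x j u) (F i t - F j t)
          (Set.Ico (0:ℝ) T) t := (hdxF i t ht).sub (hdxF j t ht)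
      exact (hasDeriv_K_norm hG.1 hy h0).const_mul (a i * a j)
    have h := HasDerivWithinAt.sum (u := Finset.univ)
      (fun i _ => HasDerivWithinAt.sum (hterm i))
    convert h using 1
    case e'_4 => rfl
    case e'_5 => rfl
    case e'_8 => ext u; simp [Finset.sum_apply]
    symm
    -- split the inner product
    have hsplit : ∀ i : Fin N, ∀ j ∈ Finset.univ.erase i,
        a i * a j * (deriv G ‖x i t - x j t‖ *
            (⟪F i t - F j t, x i t - x j t⟫ / ‖x i t - x j t‖))
          = (a i * a j * (deriv G ‖x i t - x j t‖ / ‖x i t - x j t‖)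
              * ⟪F i t, x i t - x j t⟫)
            - (a i * a j * (deriv G ‖x i t - x j t‖ / ‖x i t - x j t‖)
              * ⟪F j t, x i t - x j t⟫) := by
      intro i j _
      rw [inner_sub_left]
      ring
    rw [Finset.sum_congr rfl fun i _ => Finset.sum_congr rfl fun j hj => hsplit i j hj]
    simp only [Finset.sum_sub_distrib]
    set P : Fin N → Fin N → ℝ := fun i j =>
      a i * a j * (deriv G ‖x i t - x j t‖ / ‖x i t - x j t‖) * ⟪F i t, x i t - x j t⟫
      with hPdef
    set P' : Fin N → Fin N → ℝ := fun i j =>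
      a i * a j * (deriv G ‖x i t - x j t‖ / ‖x i t - x j t‖) * ⟪F j t, x i t - x j t⟫
      with hP'def
    have hswap : ∑ i, ∑ j ∈ Finset.univ.erase i, P' i j
        = - ∑ i, ∑ j ∈ Finset.univ.erase i, P i j := by
      rw [sum_erase_swap (f := P'), ← Finset.sum_neg_distrib]
      refine Finset.sum_congr rfl fun i _ => ?_
      rw [← Finset.sum_neg_distrib]
      refine Finset.sum_congr rfl fun j _ => ?_
      rw [hP'def, hPdef]
      simp only
      rw [show x j t - x i t = -(x i t - x j t) from (neg_sub _ _).symm,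
        inner_neg_right, norm_neg]
      ring
    have hPzero : ∀ i : Fin N, ∑ j ∈ Finset.univ.erase i, P i j = 0 := by
      intro i
      have h1 : ∀ j ∈ Finset.univ.erase i, P i j
          = a i * ⟪F i t, (a j * (deriv G ‖x i t - x j t‖ / ‖x i t - x j t‖))
              • (x i t - x j t)⟫ := by
        intro j _
        rw [hPdef]
        simp only
        rw [real_inner_smul_right]
        ring
      rw [Finset.sum_congr rfl h1, ← Finset.mul_sum, ← inner_sum]
      have hFp : F i t = perp (∑ j ∈ Finset.univ.erase i,
          (a j * (deriv G ‖x i t - x j t‖ / ‖x i t - x j t‖)) • (x i t - x j t)) := by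
        rw [hFdef]
        exact F_eq_perp G a (fun k => x k t) i
      rw [hFp, inner_perp_self, mul_zero]
    rw [hswap]
    rw [Finset.sum_congr rfl fun i _ => hPzero i]
    simp
  have hHconst := const_of_deriv_zero hHder
  -- Reduce to a kernel tending to +infinity near 0
  suffices key : ∀ g : ℝ → ℝ, ContinuousOn g (Set.Ioi 0) →
      Tendsto g (nhdsWithin 0 (Set.Ioi 0)) atTop →
      (∀ t ∈ Set.Ico (0:ℝ) T,
        (∑ i, ∑ j ∈ Finset.univ.erase i, a i * a j * g ‖x i t - x j t‖)
          = ∑ i, ∑ j ∈ Finset.univ.erase i, a i * a j * g ‖x i 0 - x j 0‖) → False by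
    have hGcont : ContinuousOn G (Set.Ioi 0) := hG.1.continuousOn
    have hev : ∀ᶠ r in nhdsWithin 0 (Set.Ioi 0), 1 ≤ |G r| :=
      hGsing.eventually_ge_atTop 1
    rw [Filter.eventually_iff, mem_nhdsGT_iff_exists_Ioo_subset] at hev
    obtain ⟨δ, hδpos, hδ⟩ := hev
    have hIooMem : Set.Ioo (0:ℝ) δ ∈ nhdsWithin 0 (Set.Ioi 0) :=
      Ioo_mem_nhdsGT_of_mem ⟨le_refl 0, hδpos⟩
    have hdich : (∀ r ∈ Set.Ioo (0:ℝ) δ, 0 < G r) ∨ (∀ r ∈ Set.Ioo (0:ℝ) δ, G r < 0) := by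
      by_contra hc
      push_neg at hc
      obtain ⟨⟨r₁, hr₁m, hr₁⟩, ⟨r₂, hr₂m, hr₂⟩⟩ := hc
      have hsub : Set.uIcc r₁ r₂ ⊆ Set.Ioo (0:ℝ) δ :=
        (Set.ordConnected_Ioo).uIcc_subset hr₁m hr₂m
      have hcont : ContinuousOn G (Set.uIcc r₁ r₂) :=
        hGcont.mono (hsub.trans (fun r hr => hr.1))
      obtain ⟨c, hcm, hc0⟩ := intermediate_value_uIcc hcont
        (Set.Icc_subset_uIcc (⟨hr₁, hr₂⟩ : (0:ℝ) ∈ Set.Icc (G r₁) (G r₂)))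
      have h1 : (1:ℝ) ≤ |G c| := hδ (hsub hcm)
      rw [hc0] at h1
      simp at h1
      linarith
    rcases hdich with hpos | hneg
    · refine key G hGcont ?_ hHconst
      refine hGsing.congr' ?_
      exact Filter.eventuallyEq_of_mem hIooMem (fun r hr => abs_of_pos (hpos r hr))
    · refine key (fun r => -G r) hGcont.neg ?_ ?_
      · refine hGsing.congr' ?_
        exact Filter.eventuallyEq_of_mem hIooMem (fun r hr => abs_of_neg (hneg r hr))
      · intro t ht
        have h := hHconst t ht
        simp only [mul_neg, Finset.sum_neg_distrib, neg_inj]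
        exact h
  -- Proof of the key statement
  intro g hgc hgt hgH
  have hev1 : ∀ᶠ r in nhdsWithin 0 (Set.Ioi 0), (1:ℝ) ≤ g r := hgt.eventually_ge_atTop 1
  rw [Filter.eventually_iff, mem_nhdsGT_iff_exists_Ioo_subset] at hev1
  obtain ⟨δ₁, hδ₁pos, hδ₁⟩ := hev1
  set D' : ℝ := max D 1 with hD'def
  have hδ₂pos : (0:ℝ) < min δ₁ 1 := lt_min hδ₁pos one_pos
  have hne : (Set.Icc (min δ₁ 1) D').Nonempty :=
    Set.nonempty_Icc.2 ((min_le_right δ₁ 1).trans (le_max_right D 1))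
  have hsubIoi : Set.Icc (min δ₁ 1) D' ⊆ Set.Ioi (0:ℝ) :=
    fun r hr => lt_of_lt_of_le hδ₂pos hr.1
  obtain ⟨r₀, hr₀mem, hr₀min⟩ :=
    isCompact_Icc.exists_isMinOn hne (hgc.mono hsubIoi)
  rw [isMinOn_iff] at hr₀min
  set m : ℝ := min (g r₀) 0 with hmdef
  have hm0 : m ≤ 0 := min_le_right _ _
  have hmlow : ∀ r ∈ Set.Ioc (0:ℝ) D', m ≤ g r := by
    intro r hr
    rcases lt_or_ge r (min δ₁ 1) with h | h
    · have h1 : (1:ℝ) ≤ g r :=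
        hδ₁ (⟨hr.1, lt_of_lt_of_le h (min_le_left _ _)⟩ : r ∈ Set.Ioo 0 δ₁)
      linarith
    · exact (min_le_left _ _).trans (hr₀min r ⟨h, hr.2⟩)
  -- minimal intensity
  obtain ⟨i₀, -, hi₀⟩ := Finset.exists_min_image Finset.univ a
    ⟨⟨0, hN⟩, Finset.mem_univ _⟩
  set Sa : ℝ := ∑ i, ∑ j ∈ Finset.univ.erase i, a i * a j with hSadef
  set H0 : ℝ := ∑ i, ∑ j ∈ Finset.univ.erase i, a i * a j * g ‖x i 0 - x j 0‖ with hH0def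
  set B : ℝ := m + (H0 - m * Sa) / (a i₀ * a i₀) with hBdef
  have hB : ∀ t ∈ Set.Ico (0:ℝ) T, ∀ i j : Fin N, i ≠ j → g ‖x i t - x j t‖ ≤ B := by
    intro t ht i j hij
    have hnn : ∀ k l : Fin N, k ≠ l →
        0 ≤ a k * a l * (g ‖x k t - x l t‖ - m) := by
      intro k l hkl
      have hrmem : ‖x k t - x l t‖ ∈ Set.Ioc (0:ℝ) D' :=
        ⟨norm_pos_iff.2 (sub_ne_zero.2 (hsep t ht k l hkl)),
          (hDb t ht k l hkl).trans (le_max_left D 1)⟩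
      have := hmlow _ hrmem
      have hkl' : 0 < a k * a l := mul_pos (ha k) (ha l)
      nlinarith
    have hsum : ∑ k, ∑ l ∈ Finset.univ.erase k, a k * a l * (g ‖x k t - x l t‖ - m)
        = H0 - m * Sa := by
      simp only [mul_sub, Finset.sum_sub_distrib]
      rw [hgH t ht]
      have : ∑ k, ∑ l ∈ Finset.univ.erase k, a k * a l * m = m * Sa := by
        rw [hSadef, Finset.mul_sum]
        refine Finset.sum_congr rfl fun k _ => ?_
        rw [Finset.mul_sum]
        exact Finset.sum_congr rfl fun l _ => by ring
      rw [this]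
    have hsingle : a i * a j * (g ‖x i t - x j t‖ - m) ≤ H0 - m * Sa := by
      rw [← hsum]
      calc a i * a j * (g ‖x i t - x j t‖ - m)
          ≤ ∑ l ∈ Finset.univ.erase i, a i * a l * (g ‖x i t - x l t‖ - m) :=
            Finset.single_le_sum
              (fun l hl => hnn i l (((Finset.mem_erase.1 hl).1).symm))
              (Finset.mem_erase.2 ⟨hij.symm, Finset.mem_univ _⟩)
        _ ≤ ∑ k, ∑ l ∈ Finset.univ.erase k, a k * a l * (g ‖x k t - x l t‖ - m) :=
            Finset.single_le_sum
              (fun k _ => Finset.sum_nonneg fun l hl =>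
                hnn k l (((Finset.mem_erase.1 hl).1).symm))
              (Finset.mem_univ i)
    have hnum : 0 ≤ H0 - m * Sa := le_trans (hnn i j hij) hsingle
    have hden : (0:ℝ) < a i₀ * a i₀ := mul_pos (ha i₀) (ha i₀)
    have hden2 : a i₀ * a i₀ ≤ a i * a j :=
      mul_le_mul (hi₀ i (Finset.mem_univ i)) (hi₀ j (Finset.mem_univ j))
        (ha i₀).le (ha i).le
    have h1 : g ‖x i t - x j t‖ - m ≤ (H0 - m * Sa) / (a i * a j) :=
      (le_div_iff₀ (mul_pos (ha i) (ha j))).2 (by rw [mul_comm]; exact hsingle)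
    have h2 : (H0 - m * Sa) / (a i * a j) ≤ (H0 - m * Sa) / (a i₀ * a i₀) :=
      div_le_div_of_nonneg_left hnum hden hden2
    rw [hBdef]
    linarith
  have hevB : ∀ᶠ r in nhdsWithin 0 (Set.Ioi 0), B < g r := hgt.eventually_gt_atTop B
  rw [Filter.eventually_iff, mem_nhdsGT_iff_exists_Ioo_subset] at hevB
  obtain ⟨ε, hεpos, hε⟩ := hevB
  obtain ⟨t, ht0, htT, i, j, hij, hlt⟩ := hcol ε hεpos 0 le_rfl hT
  have htmem : t ∈ Set.Ico (0:ℝ) T := ⟨ht0.le, htT⟩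
  have hrpos : 0 < ‖x i t - x j t‖ :=
    norm_pos_iff.2 (sub_ne_zero.2 (hsep t htmem i j hij))
  have hgr : B < g ‖x i t - x j t‖ := hε ⟨hrpos, hlt⟩
  exact absurd (hB t htmem i j hij) (not_le.2 hgr)
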